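/- (Existential weak regularity for subgraphs) Let $G=(L,R,E)$ be a bipartite graph and $H$ a subgraph of $G$ (on the same vertex sets, with $E(H) \subseteq E(G)$). For any $\gamma > 0$, there exist $p \le 1/\gamma^2$ triples $(c_i, S_i, T_i) \in \mathbb{R} \times 2^L \times 2^R$ with $\sum_{i=1}^p |c_i| \le 1/\gamma$, such that for every $S \subseteq L$ and $T \subseteq R$: $\big| |E_H(S,T)| - \sum_{i=1}^p c_i \cdot |E_G(S_i \cap S, T_i \cap T)| \big| \le \gamma \cdot |E(G)|$. -/

import Mathlib

open Finset

open scoped Classical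

/-- Number of edges of the (sub)graph `P` between `S` and `T`. -/
noncomputable def eCount {L R : Type*} (P : L → R → Prop) (S : Finset L) (T : Finset R) : ℕ :=
  ((S ×ˢ T).filter fun p => P p.1 p.2).card

section Aux

variable {L R : Type*} [Fintype L] [Fintype R]

/-- Cut value of a weight function `f` restricted to `G`-edges. -/
noncomputable def cutW (G : L → R → Prop) (f : L → R → ℝ) (S : Finset L) (T : Finset R) : ℝ :=
  ∑ ℓ ∈ S, ∑ r ∈ T, if G ℓ r then f ℓ r else 0

/-- Energy of `f` with respect to `G`-edges. -/
noncomputable def energyW (G : L → R → Prop) (f : L → R → ℝ) : ℝ :=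
  ∑ ℓ, ∑ r, if G ℓ r then (f ℓ r) ^ 2 else 0

/-- The cut function of a triple. -/
noncomputable def cutF (c : ℝ × Finset L × Finset R) (ℓ : L) (r : R) : ℝ :=
  if ℓ ∈ c.2.1 ∧ r ∈ c.2.2 then c.1 else 0

/-- The difference between the indicator of `H` and the sum of cut functions. -/
noncomputable def diffW (H : L → R → Prop) (cs : List (ℝ × Finset L × Finset R))
    (ℓ : L) (r : R) : ℝ :=
  (if H ℓ r then 1 else 0) - (cs.map fun c => cutF c ℓ r).sum

lemma eCount_cast (P : L → R → Prop) (S : Finset L) (T : Finset R) :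
    (eCount P S T : ℝ) = ∑ ℓ ∈ S, ∑ r ∈ T, if P ℓ r then (1 : ℝ) else 0 := by
  rw [eCount, Finset.card_filter]
  push_cast
  rw [Finset.sum_product]

lemma eCount_le (G : L → R → Prop) (S : Finset L) (T : Finset R) :
    eCount G S T ≤ eCount G Finset.univ Finset.univ :=
  Finset.card_le_card (Finset.filter_subset_filter _
    (Finset.product_subset_product (Finset.subset_univ S) (Finset.subset_univ T)))

lemma sum_ite_inter (S₀ : Finset L) (S : Finset L) (T₀ : Finset R) (T : Finset R)
    (g : L → R → ℝ) :
    (∑ ℓ ∈ S, ∑ r ∈ T, if ℓ ∈ S₀ ∧ r ∈ T₀ then g ℓ r else 0)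
      = ∑ ℓ ∈ S₀ ∩ S, ∑ r ∈ T₀ ∩ T, g ℓ r := by
  have inner : ∀ ℓ : L, (∑ r ∈ T, if ℓ ∈ S₀ ∧ r ∈ T₀ then g ℓ r else 0)
      = if ℓ ∈ S₀ then ∑ r ∈ T₀ ∩ T, g ℓ r else 0 := by
    intro ℓ
    by_cases h : ℓ ∈ S₀
    · simp only [h, true_and, if_true]
      rw [← Finset.sum_filter, Finset.filter_mem_eq_inter, Finset.inter_comm]
    · simp [h]
  simp_rw [inner]
  rw [← Finset.sum_filter, Finset.filter_mem_eq_inter, Finset.inter_comm]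

lemma cutW_sub (G : L → R → Prop) (f g : L → R → ℝ) (S : Finset L) (T : Finset R) :
    cutW G (fun ℓ r => f ℓ r - g ℓ r) S T = cutW G f S T - cutW G g S T := by
  unfold cutW
  rw [← Finset.sum_sub_distrib]
  refine Finset.sum_congr rfl fun ℓ _ => ?_
  rw [← Finset.sum_sub_distrib]
  refine Finset.sum_congr rfl fun r _ => ?_
  split_ifs <;> ring

lemma cutW_H (G H : L → R → Prop) (hsub : ∀ ℓ r, H ℓ r → G ℓ r)
    (S : Finset L) (T : Finset R) :
    cutW G (fun ℓ r => if H ℓ r then (1 : ℝ) else 0) S T = (eCount H S T : ℝ) := by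
  rw [eCount_cast]
  refine Finset.sum_congr rfl fun ℓ _ => Finset.sum_congr rfl fun r _ => ?_
  by_cases h : H ℓ r
  · simp [h, hsub ℓ r h]
  · simp [h]

lemma cutW_cutF (G : L → R → Prop) (c : ℝ × Finset L × Finset R)
    (S : Finset L) (T : Finset R) :
    cutW G (cutF c) S T = c.1 * (eCount G (c.2.1 ∩ S) (c.2.2 ∩ T) : ℝ) := by
  unfold cutW cutF
  have key : ∀ ℓ r, (if G ℓ r then (if ℓ ∈ c.2.1 ∧ r ∈ c.2.2 then c.1 else 0) else 0)
      = if ℓ ∈ c.2.1 ∧ r ∈ c.2.2 then (c.1 * if G ℓ r then (1:ℝ) else 0) else 0 := by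
    intro ℓ r; split_ifs <;> ring
  simp_rw [key]
  rw [sum_ite_inter, eCount_cast, Finset.mul_sum]
  exact Finset.sum_congr rfl fun ℓ _ => by rw [Finset.mul_sum]

lemma diffW_cons (H : L → R → Prop) (c : ℝ × Finset L × Finset R)
    (cs : List (ℝ × Finset L × Finset R)) :
    diffW H (c :: cs) = fun ℓ r => diffW H cs ℓ r - cutF c ℓ r := by
  funext ℓ r
  simp only [diffW, List.map_cons, List.sum_cons]
  ring

lemma cutW_diffW (G H : L → R → Prop) (hsub : ∀ ℓ r, H ℓ r → G ℓ r)
    (cs : List (ℝ × Finset L × Finset R)) (S : Finset L) (T : Finset R) :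
    cutW G (diffW H cs) S T
      = (eCount H S T : ℝ)
        - (cs.map fun c => c.1 * (eCount G (c.2.1 ∩ S) (c.2.2 ∩ T) : ℝ)).sum := by
  induction cs with
  | nil =>
      have h0 : diffW H ([] : List (ℝ × Finset L × Finset R))
          = fun ℓ r => if H ℓ r then (1:ℝ) else 0 := by
        funext ℓ r; simp [diffW]
      rw [h0, cutW_H G H hsub]; simp
  | cons c cs ih =>
      rw [diffW_cons, cutW_sub, ih, cutW_cutF]
      simp only [List.map_cons, List.sum_cons]
      ring

lemma energyW_nonneg (G : L → R → Prop) (f : L → R → ℝ) : 0 ≤ energyW G f :=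
  Finset.sum_nonneg fun _ _ => Finset.sum_nonneg fun _ _ => by positivity

lemma energy_zero_forall (G : L → R → Prop) (f : L → R → ℝ)
    (h : energyW G f = 0) : ∀ ℓ r, G ℓ r → f ℓ r = 0 := by
  intro ℓ r hG
  by_contra hne
  have hpos : 0 < (if G ℓ r then f ℓ r ^ 2 else 0) := by
    simp only [hG, if_true]
    have : f ℓ r ^ 2 = |f ℓ r| ^ 2 := (sq_abs _).symm
    rw [this]
    exact pow_pos (abs_pos.mpr hne) 2
  have h1 : (if G ℓ r then f ℓ r ^ 2 else 0) ≤ ∑ r', if G ℓ r' then f ℓ r' ^ 2 else 0 :=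
    Finset.single_le_sum (f := fun r' => if G ℓ r' then f ℓ r' ^ 2 else 0)
      (fun r' _ => by positivity) (Finset.mem_univ r)
  have h2 : (∑ r', if G ℓ r' then f ℓ r' ^ 2 else 0) ≤ energyW G f :=
    Finset.single_le_sum (f := fun ℓ' => ∑ r', if G ℓ' r' then f ℓ' r' ^ 2 else 0)
      (fun ℓ' _ => Finset.sum_nonneg fun r' _ => by positivity) (Finset.mem_univ ℓ)
  linarith

lemma cutW_eq_zero_of_energy (G : L → R → Prop) (f : L → R → ℝ)
    (h : energyW G f = 0) (S : Finset L) (T : Finset R) : cutW G f S T = 0 := by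
  unfold cutW
  refine Finset.sum_eq_zero fun ℓ _ => Finset.sum_eq_zero fun r _ => ?_
  by_cases hG : G ℓ r
  · simp [hG, energy_zero_forall G f h ℓ r hG]
  · simp [hG]

lemma energy_step (G : L → R → Prop) (f : L → R → ℝ) (c : ℝ)
    (S : Finset L) (T : Finset R) :
    energyW G (fun ℓ r => f ℓ r - cutF (c, S, T) ℓ r)
      = energyW G f - 2 * c * cutW G f S T + c ^ 2 * (eCount G S T : ℝ) := by
  have expand : ∀ ℓ r, (if G ℓ r then (f ℓ r - cutF (c, S, T) ℓ r) ^ 2 else 0)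
      = (if G ℓ r then f ℓ r ^ 2 else 0)
        - 2 * c * (if ℓ ∈ S ∧ r ∈ T then (if G ℓ r then f ℓ r else 0) else 0)
        + c ^ 2 * (if ℓ ∈ S ∧ r ∈ T then (if G ℓ r then (1:ℝ) else 0) else 0) := by
    intro ℓ r
    unfold cutF
    split_ifs <;> ring
  have hB : (∑ ℓ, ∑ r, if ℓ ∈ S ∧ r ∈ T then (if G ℓ r then f ℓ r else 0) else 0)
      = cutW G f S T := by
    rw [sum_ite_inter]
    simp [cutW, Finset.inter_univ]
  have hC : (∑ ℓ, ∑ r, if ℓ ∈ S ∧ r ∈ T then (if G ℓ r then (1:ℝ) else 0) else 0)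
      = (eCount G S T : ℝ) := by
    rw [sum_ite_inter, eCount_cast]
    simp [Finset.inter_univ]
  unfold energyW
  simp_rw [expand]
  rw [← hB, ← hC]
  simp_rw [Finset.sum_add_distrib, Finset.sum_sub_distrib, ← Finset.mul_sum]

lemma energy_init (G H : L → R → Prop) :
    energyW G (diffW H []) ≤ (eCount G (Finset.univ : Finset L) (Finset.univ : Finset R) : ℝ) := by
  rw [eCount_cast]
  refine Finset.sum_le_sum fun ℓ _ => Finset.sum_le_sum fun r _ => ?_
  simp only [diffW, List.map_nil, List.sum_nil, sub_zero]
  split_ifs <;> norm_num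

lemma list_sum_fin {α : Type*} (l : List α) (f : α → ℝ) :
    ∑ i : Fin l.length, f (l.get i) = (l.map f).sum := by
  induction l with
  | nil => simp
  | cons a t ih =>
      simp only [List.length_cons]
      rw [Fin.sum_univ_succ]
      simp [ih]

lemma aux_main (G H : L → R → Prop) (hsub : ∀ ℓ r, H ℓ r → G ℓ r) (γ : ℝ) (hγ : 0 < γ)
    (he : 0 < (eCount G (Finset.univ : Finset L) (Finset.univ : Finset R) : ℝ)) :
    ∀ k : ℕ, ∀ cs : List (ℝ × Finset L × Finset R), (∀ c ∈ cs, |c.1| = γ) →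
      energyW G (diffW H cs)
        ≤ k * (γ ^ 2 * (eCount G (Finset.univ : Finset L) (Finset.univ : Finset R) : ℝ)) →
      ∃ cs' : List (ℝ × Finset L × Finset R), (∀ c ∈ cs', |c.1| = γ) ∧
        energyW G (diffW H cs')
            + cs'.length * (γ ^ 2 * (eCount G (Finset.univ : Finset L) (Finset.univ : Finset R) : ℝ))
          ≤ energyW G (diffW H cs)
            + cs.length * (γ ^ 2 * (eCount G (Finset.univ : Finset L) (Finset.univ : Finset R) : ℝ)) ∧
        ∀ S T, |cutW G (diffW H cs') S T|
          ≤ γ * (eCount G (Finset.univ : Finset L) (Finset.univ : Finset R) : ℝ) := by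
  set e : ℝ := (eCount G (Finset.univ : Finset L) (Finset.univ : Finset R) : ℝ) with hedef
  intro k
  induction k with
  | zero =>
      intro cs hflag hE
      refine ⟨cs, hflag, le_refl _, fun S T => ?_⟩
      have h0 : energyW G (diffW H cs) = 0 :=
        le_antisymm (by simpa using hE) (energyW_nonneg _ _)
      rw [cutW_eq_zero_of_energy _ _ h0, abs_zero]
      positivity
  | succ k ih =>
      intro cs hflag hE
      by_cases hgood : ∀ S T, |cutW G (diffW H cs) S T| ≤ γ * e
      · exact ⟨cs, hflag, le_refl _, hgood⟩
      · push_neg at hgood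
        obtain ⟨S, T, hST⟩ := hgood
        set d := cutW G (diffW H cs) S T with hd
        set c : ℝ := if 0 ≤ d then γ else -γ with hc
        have hcabs : |c| = γ := by
          rw [hc]; split_ifs
          · exact abs_of_pos hγ
          · rw [abs_neg]; exact abs_of_pos hγ
        have hcd : c * d = γ * |d| := by
          rw [hc]; split_ifs with h
          · rw [abs_of_nonneg h]
          · rw [abs_of_neg (lt_of_not_ge h)]; ring
        have hc2 : c ^ 2 = γ ^ 2 := by
          rw [hc]; split_ifs <;> ring
        have hcount : (eCount G S T : ℝ) ≤ e := by
          rw [hedef]; exact_mod_cast eCount_le G S T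
        have hnew : energyW G (diffW H ((c, S, T) :: cs))
            ≤ energyW G (diffW H cs) - γ ^ 2 * e := by
          rw [diffW_cons, energy_step, hc2, ← hd]
          have hm1 : γ * (γ * e) < γ * |d| := mul_lt_mul_of_pos_left hST hγ
          have hm2 : γ ^ 2 * (eCount G S T : ℝ) ≤ γ ^ 2 * e :=
            mul_le_mul_of_nonneg_left hcount (sq_nonneg γ)
          linarith [hcd, hm1, hm2]
        have hk : energyW G (diffW H ((c, S, T) :: cs)) ≤ k * (γ ^ 2 * e) := by
          have : ((k : ℝ) + 1) * (γ ^ 2 * e) - γ ^ 2 * e = k * (γ ^ 2 * e) := by ring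
          push_cast at hE
          linarith
        have hflag' : ∀ c' ∈ (c, S, T) :: cs, |c'.1| = γ := by
          intro c' hm
          rcases List.mem_cons.mp hm with h | h
          · rw [h]; exact hcabs
          · exact hflag c' h
        obtain ⟨cs', hf', hΦ', hg'⟩ := ih ((c, S, T) :: cs) hflag' hk
        refine ⟨cs', hf', ?_, hg'⟩
        have hlen : (((c, S, T) :: cs).length : ℝ) = cs.length + 1 := by
          simp
        rw [hlen] at hΦ'
        nlinarith [hΦ', hnew]

end Aux

/-- Existential weak regularity lemma for subgraphs: for any bipartite graph `G` with at least
one edge, any subgraph `H` of `G`, and any `γ > 0`, there exist `p ≤ 1/γ²` triples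
`(cᵢ, Sᵢ, Tᵢ)` with `∑ᵢ |cᵢ| ≤ 1/γ` such that for all `S ⊆ L`, `T ⊆ R`,
`| |E_H(S,T)| - ∑ᵢ cᵢ |E_G(Sᵢ ∩ S, Tᵢ ∩ T)| | ≤ γ |E(G)|`. -/
theorem existential_weak_regularity {L R : Type*} [Fintype L] [Fintype R]
    (G H : L → R → Prop) (hsub : ∀ ℓ r, H ℓ r → G ℓ r)
    (hedge : 1 ≤ eCount G Finset.univ Finset.univ)
    (γ : ℝ) (hγ : 0 < γ) :
    ∃ (p : ℕ) (c : Fin p → ℝ) (Sc : Fin p → Finset L) (Tc : Fin p → Finset R),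
      (p : ℝ) ≤ 1 / γ ^ 2 ∧
      (∑ i, |c i|) ≤ 1 / γ ∧
      ∀ (S : Finset L) (T : Finset R),
        |(eCount H S T : ℝ) - ∑ i, c i * (eCount G (Sc i ∩ S) (Tc i ∩ T) : ℝ)| ≤
          γ * (eCount G Finset.univ Finset.univ : ℝ) := by
  set e : ℝ := (eCount G (Finset.univ : Finset L) (Finset.univ : Finset R) : ℝ) with hedef
  have he1 : (1 : ℝ) ≤ e := by rw [hedef]; exact_mod_cast hedge
  have he0 : (0 : ℝ) < e := lt_of_lt_of_le one_pos he1
  have hbound : energyW G (diffW H ([] : List (ℝ × Finset L × Finset R)))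
      ≤ (⌈γ⁻¹ ^ 2⌉₊ : ℕ) * (γ ^ 2 * e) := by
    have h1 : energyW G (diffW H ([] : List (ℝ × Finset L × Finset R))) ≤ e := energy_init G H
    have h2 : γ⁻¹ ^ 2 ≤ (⌈γ⁻¹ ^ 2⌉₊ : ℝ) := Nat.le_ceil _
    have h3 : (1 : ℝ) ≤ (⌈γ⁻¹ ^ 2⌉₊ : ℝ) * γ ^ 2 := by
      have : γ⁻¹ ^ 2 * γ ^ 2 = 1 := by
        field_simp
      nlinarith [sq_nonneg γ, hγ]
    nlinarith
  obtain ⟨cs, hflag, hΦ, hgood⟩ :=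
    aux_main G H hsub γ hγ he0 ⌈γ⁻¹ ^ 2⌉₊ [] (by simp) hbound
  have hE0 : 0 ≤ energyW G (diffW H cs) := energyW_nonneg _ _
  have hinit : energyW G (diffW H ([] : List (ℝ × Finset L × Finset R))) ≤ e := energy_init G H
  have hΦ' : (cs.length : ℝ) * (γ ^ 2 * e) ≤ e := by
    simp only [List.length_nil, Nat.cast_zero, zero_mul, add_zero] at hΦ
    linarith
  have hplen : (cs.length : ℝ) ≤ 1 / γ ^ 2 := by
    rw [le_div_iff₀ (by positivity : (0:ℝ) < γ ^ 2), ← mul_le_mul_iff_of_pos_right he0]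
    linarith [hΦ']
  refine ⟨cs.length, fun i => (cs.get i).1, fun i => (cs.get i).2.1, fun i => (cs.get i).2.2,
    hplen, ?_, ?_⟩
  · have hsum : (∑ i : Fin cs.length, |(cs.get i).1|) = cs.length * γ := by
      rw [Finset.sum_congr rfl (fun i _ => hflag (cs.get i) (cs.get_mem i))]
      simp [mul_comm]
    rw [hsum]
    calc (cs.length : ℝ) * γ ≤ (1 / γ ^ 2) * γ :=
          mul_le_mul_of_nonneg_right hplen hγ.le
      _ = 1 / γ := by field_simp
  · intro S T
    have h := hgood S T
    rw [cutW_diffW G H hsub cs S T] at h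
    rw [← list_sum_fin cs (fun t => t.1 * (eCount G (t.2.1 ∩ S) (t.2.2 ∩ T) : ℝ))] at h
    exact h
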